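/- Let V be a C*-pseudo-multiplicative unitary. Then Â_{V^{op}} = A_V* and A_{V^{op}} = Â_V*, where Â_V = [⟨β|₂ V |α⟩₂] and A_V = [⟨α|₁ V |β̂⟩₁] and V^{op} = Σ V* Σ. -/
import Mathlib


/- STATEMENT 8: For a C*-pseudo-multiplicative unitary `V`, one has
`Â_{V^op} = A_V*` and `A_{V^op} = Â_V*`, where `Â_V = [⟨β|₂ V |α⟩₂]`,
`A_V = [⟨α|₁ V |β̂⟩₁]` and `V^op = Σ V* Σ`. -/

open ContinuousLinearMap

lemma star_closure_span_aux {E : Type*} [NormedAddCommGroup E] [InnerProductSpace ℂ E]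
    [CompleteSpace E] (S : Set (E →L[ℂ] E)) :
    star '' closure (Submodule.span ℂ S : Set (E →L[ℂ] E))
      = closure (Submodule.span ℂ (star '' S) : Set (E →L[ℂ] E)) := by
  let f : (E →L[ℂ] E) ≃ₗᵢ⋆[ℂ] (E →L[ℂ] E) := ContinuousLinearMap.adjoint
  have hstar : (star : (E →L[ℂ] E) → (E →L[ℂ] E)) = ⇑f := by
    funext x; exact star_eq_adjoint x
  rw [hstar]
  have h1 : ⇑f '' closure (Submodule.span ℂ S : Set (E →L[ℂ] E))
      = closure (⇑f '' (Submodule.span ℂ S : Set (E →L[ℂ] E))) :=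
    f.toHomeomorph.image_closure _
  rw [h1]
  congr 1
  have h2 := Submodule.map_span (f : (E →L[ℂ] E) →ₛₗ[starRingEnd ℂ] (E →L[ℂ] E)) S
  have h3 : (Submodule.map (f : (E →L[ℂ] E) →ₛₗ[starRingEnd ℂ] (E →L[ℂ] E))
      (Submodule.span ℂ S) : Set (E →L[ℂ] E))
      = ⇑f '' (Submodule.span ℂ S : Set (E →L[ℂ] E)) := rfl
  rw [← h3, h2]
  rfl

lemma closure_span_eq_star_aux {E : Type*} [NormedAddCommGroup E] [InnerProductSpace ℂ E]
    [CompleteSpace E] {S₁ S₂ : Set (E →L[ℂ] E)} (h : S₁ = star '' S₂) :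
    closure (Submodule.span ℂ S₁ : Set (E →L[ℂ] E))
      = star '' closure (Submodule.span ℂ S₂ : Set (E →L[ℂ] E)) := by
  rw [h, star_closure_span_aux]

set_option maxHeartbeats 1000000 in
theorem stmt_8 {𝔎 H Hs Hr Hs' Hr' : Type*}
    [NormedAddCommGroup 𝔎] [InnerProductSpace ℂ 𝔎] [CompleteSpace 𝔎]
    [NormedAddCommGroup H] [InnerProductSpace ℂ H] [CompleteSpace H]
    [NormedAddCommGroup Hs] [InnerProductSpace ℂ Hs] [CompleteSpace Hs]
    [NormedAddCommGroup Hr] [InnerProductSpace ℂ Hr] [CompleteSpace Hr]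
    [NormedAddCommGroup Hs'] [InnerProductSpace ℂ Hs'] [CompleteSpace Hs']
    [NormedAddCommGroup Hr'] [InnerProductSpace ℂ Hr'] [CompleteSpace Hr']
    -- the C*-(𝔟†,𝔟,𝔟†)-module structure (H, β̂, α, β)
    (α β βh : Submodule ℂ (𝔎 →L[ℂ] H))
    -- leg insertions on `Hs = H ⊗_{β̂,α} H`, `Hr = H ⊗_{α,β} H`,
    -- `Hs' = H ⊗_{β,α} H` and `Hr' = H ⊗_{α,β̂} H`
    (k1s k2s : (𝔎 →L[ℂ] H) →L[ℂ] (H →L[ℂ] Hs))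
    (k1r k2r : (𝔎 →L[ℂ] H) →L[ℂ] (H →L[ℂ] Hr))
    (k1s' k2s' : (𝔎 →L[ℂ] H) →L[ℂ] (H →L[ℂ] Hs'))
    (k1r' k2r' : (𝔎 →L[ℂ] H) →L[ℂ] (H →L[ℂ] Hr'))
    -- the unitary `V`
    (V : Hs →L[ℂ] Hr)
    (hVu₁ : adjoint V ∘L V = ContinuousLinearMap.id ℂ Hs)
    (hVu₂ : V ∘L adjoint V = ContinuousLinearMap.id ℂ Hr)
    -- the intertwining relations: V(α◁α) = α▷α
    (hint1 : closure (Submodule.span ℂ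
        {x : 𝔎 →L[ℂ] Hr | ∃ η ∈ α, ∃ ξ ∈ α, x = V ∘L (k2s η ∘L ξ)} : Set (𝔎 →L[ℂ] Hr))
      = closure (Submodule.span ℂ
        {x : 𝔎 →L[ℂ] Hr | ∃ ξ ∈ α, ∃ η ∈ α, x = k1r ξ ∘L η} : Set (𝔎 →L[ℂ] Hr)))
    -- V(β̂▷β) = β̂◁β
    (hint2 : closure (Submodule.span ℂ
        {x : 𝔎 →L[ℂ] Hr | ∃ ζ ∈ βh, ∃ η ∈ β, x = V ∘L (k1s ζ ∘L η)} : Set (𝔎 →L[ℂ] Hr))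
      = closure (Submodule.span ℂ
        {x : 𝔎 →L[ℂ] Hr | ∃ η ∈ β, ∃ ζ ∈ βh, x = k2r η ∘L ζ} : Set (𝔎 →L[ℂ] Hr)))
    -- V(β̂▷β̂) = α▷β̂
    (hint3 : closure (Submodule.span ℂ
        {x : 𝔎 →L[ℂ] Hr | ∃ ζ ∈ βh, ∃ ζ' ∈ βh, x = V ∘L (k1s ζ ∘L ζ')} : Set (𝔎 →L[ℂ] Hr))
      = closure (Submodule.span ℂ
        {x : 𝔎 →L[ℂ] Hr | ∃ ξ ∈ α, ∃ ζ ∈ βh, x = k1r ξ ∘L ζ} : Set (𝔎 →L[ℂ] Hr)))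
    -- V(β◁α) = β◁β
    (hint4 : closure (Submodule.span ℂ
        {x : 𝔎 →L[ℂ] Hr | ∃ ξ ∈ α, ∃ η ∈ β, x = V ∘L (k2s ξ ∘L η)} : Set (𝔎 →L[ℂ] Hr))
      = closure (Submodule.span ℂ
        {x : 𝔎 →L[ℂ] Hr | ∃ η' ∈ β, ∃ η ∈ β, x = k2r η' ∘L η} : Set (𝔎 →L[ℂ] Hr)))
    -- the flips `Σ : H ⊗_{α,β} H → H ⊗_{β,α} H` and `Σ : H ⊗_{β̂,α} H → H ⊗_{α,β̂} H`
    (Sr : Hr →L[ℂ] Hs') (Ss : Hs →L[ℂ] Hr')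
    (hSr₁ : adjoint Sr ∘L Sr = ContinuousLinearMap.id ℂ Hr)
    (hSr₂ : Sr ∘L adjoint Sr = ContinuousLinearMap.id ℂ Hs')
    (hSs₁ : adjoint Ss ∘L Ss = ContinuousLinearMap.id ℂ Hs)
    (hSs₂ : Ss ∘L adjoint Ss = ContinuousLinearMap.id ℂ Hr')
    (hSrk₁ : ∀ ξ, Sr ∘L k1r ξ = k2s' ξ) (hSrk₂ : ∀ ξ, Sr ∘L k2r ξ = k1s' ξ)
    (hSsk₁ : ∀ ξ, Ss ∘L k1s ξ = k2r' ξ) (hSsk₂ : ∀ ξ, Ss ∘L k2s ξ = k1r' ξ)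
    -- the opposite unitary `V^op = Σ V* Σ : H ⊗_{β,α} H → H ⊗_{α,β̂} H`
    (Vop : Hs' →L[ℂ] Hr')
    (hVop : Vop = Ss ∘L (adjoint V ∘L adjoint Sr)) :
    -- conclusion: Â_{V^op} = A_V* and A_{V^op} = Â_V*
    closure (Submodule.span ℂ
        {x : H →L[ℂ] H | ∃ η ∈ βh, ∃ ξ ∈ α,
          x = adjoint (k2r' η) ∘L (Vop ∘L k2s' ξ)} : Set (H →L[ℂ] H))
      = star '' closure (Submodule.span ℂ
        {x : H →L[ℂ] H | ∃ ξ ∈ α, ∃ ζ ∈ βh,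
          x = adjoint (k1r ξ) ∘L (V ∘L k1s ζ)} : Set (H →L[ℂ] H)) ∧
    closure (Submodule.span ℂ
        {x : H →L[ℂ] H | ∃ ξ ∈ α, ∃ η ∈ β,
          x = adjoint (k1r' ξ) ∘L (Vop ∘L k1s' η)} : Set (H →L[ℂ] H))
      = star '' closure (Submodule.span ℂ
        {x : H →L[ℂ] H | ∃ η ∈ β, ∃ ξ ∈ α,
          x = adjoint (k2r η) ∘L (V ∘L k2s ξ)} : Set (H →L[ℂ] H)) := by
  have hS1 : ∀ y : Hs, adjoint Ss (Ss y) = y := fun y => by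
    have := DFunLike.congr_fun hSs₁ y; simpa using this
  have hR1 : ∀ y : Hr, adjoint Sr (Sr y) = y := fun y => by
    have := DFunLike.congr_fun hSr₁ y; simpa using this
  have key1 : ∀ η ξ, adjoint (k2r' η) ∘L (Vop ∘L k2s' ξ)
      = star (adjoint (k1r ξ) ∘L (V ∘L k1s η)) := by
    intro η ξ
    rw [star_eq_adjoint, ← hSsk₁, ← hSrk₁, hVop]
    ext x
    simp only [adjoint_comp, comp_apply, adjoint_adjoint]
    rw [hR1, hS1]
  have key2 : ∀ ξ η, adjoint (k1r' ξ) ∘L (Vop ∘L k1s' η)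
      = star (adjoint (k2r η) ∘L (V ∘L k2s ξ)) := by
    intro ξ η
    rw [star_eq_adjoint, ← hSsk₂, ← hSrk₂, hVop]
    ext x
    simp only [adjoint_comp, comp_apply, adjoint_adjoint]
    rw [hR1, hS1]
  have hset1 : {x : H →L[ℂ] H | ∃ η ∈ βh, ∃ ξ ∈ α,
        x = adjoint (k2r' η) ∘L (Vop ∘L k2s' ξ)}
      = star '' {x : H →L[ℂ] H | ∃ ξ ∈ α, ∃ ζ ∈ βh,
        x = adjoint (k1r ξ) ∘L (V ∘L k1s ζ)} := by
    ext x
    constructor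
    · rintro ⟨η, hη, ξ, hξ, rfl⟩
      exact ⟨adjoint (k1r ξ) ∘L (V ∘L k1s η), ⟨ξ, hξ, η, hη, rfl⟩, (key1 η ξ).symm⟩
    · rintro ⟨y, ⟨ξ, hξ, ζ, hζ, rfl⟩, rfl⟩
      exact ⟨ζ, hζ, ξ, hξ, (key1 ζ ξ).symm⟩
  have hset2 : {x : H →L[ℂ] H | ∃ ξ ∈ α, ∃ η ∈ β,
        x = adjoint (k1r' ξ) ∘L (Vop ∘L k1s' η)}
      = star '' {x : H →L[ℂ] H | ∃ η ∈ β, ∃ ξ ∈ α,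
        x = adjoint (k2r η) ∘L (V ∘L k2s ξ)} := by
    ext x
    constructor
    · rintro ⟨ξ, hξ, η, hη, rfl⟩
      exact ⟨adjoint (k2r η) ∘L (V ∘L k2s ξ), ⟨η, hη, ξ, hξ, rfl⟩, (key2 ξ η).symm⟩
    · rintro ⟨y, ⟨η, hη, ξ, hξ, rfl⟩, rfl⟩
      exact ⟨ξ, hξ, η, hη, (key2 ξ η).symm⟩
  exact ⟨closure_span_eq_star_aux hset1, closure_span_eq_star_aux hset2⟩
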